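/- arXiv:1905.07498 — 2 statements merged into one kernel-verified Lean document; each statement's English description precedes it below -/
import Mathlib

section
/- Let K be the boxcar kernel and ν > 0, so that h_ν(x) = 1/(2ν) for |x| ≤ ν and 0 otherwise, and let g_ν(σ) = 2Φ(ν/σ) − 1. Then σ ↦ V_ν(0,σ) is differentiable on (0,∞) with derivative (∂V_ν/∂σ)(0,σ) = (1/(4ν²))·g_ν'(σ)·[1 − 2·g_ν(σ)], where g_ν'(σ) = −(2ν/σ²)·φ(ν/σ). -/
open MeasureTheory ProbabilityTheory Real Filter

/-- The boxcar kernel: `K(x) = 1/2` for `|x| ≤ 1`, 0 otherwise. -/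
noncomputable def boxcar (x : ℝ) : ℝ := if |x| ≤ 1 then 1 / 2 else 0

/-- The short-exposure PSF `h_ν(x) = (1/ν) K(x/ν)`. -/
noncomputable def shortPSF (K : ℝ → ℝ) (ν : ℝ) (x : ℝ) : ℝ := (1 / ν) * K (x / ν)

/-- `V_ν(x,σ) = Var[h_ν(x-Θ)] = E[h_ν(x-Θ)²] − (E[h_ν(x-Θ)])²` where `Θ ~ N(0,σ²)`. -/
noncomputable def Vnu (K : ℝ → ℝ) (ν σ x : ℝ) : ℝ :=
  (∫ θ, (shortPSF K ν (x - θ)) ^ 2 ∂(gaussianReal 0 (σ ^ 2).toNNReal))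
    - (∫ θ, shortPSF K ν (x - θ) ∂(gaussianReal 0 (σ ^ 2).toNNReal)) ^ 2

/-- `Φ`, the standard normal CDF. -/
noncomputable def stdNormalCDF (x : ℝ) : ℝ := ProbabilityTheory.cdf (gaussianReal 0 1) x

/-- `φ`, the standard normal PDF. -/
noncomputable def stdNormalPDF (u : ℝ) : ℝ :=
  (1 / Real.sqrt (2 * Real.pi)) * Real.exp (-u ^ 2 / 2)

section Aux

open Set

lemma aux_pdf_eq : gaussianPDFReal 0 1 = stdNormalPDF := by
  funext u
  simp [gaussianPDFReal, stdNormalPDF]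

lemma aux_cdf_eq_integral (x : ℝ) :
    stdNormalCDF x = ∫ t in Iic x, stdNormalPDF t := by
  rw [stdNormalCDF, cdf_eq_real, measureReal_def,
    gaussianReal_apply_eq_integral 0 one_ne_zero _,
    ENNReal.toReal_ofReal (integral_nonneg fun t => gaussianPDFReal_nonneg _ _ _), aux_pdf_eq]

lemma stdNormalCDF_hasDerivAt (x : ℝ) :
    HasDerivAt stdNormalCDF (stdNormalPDF x) x := by
  have hint : Integrable stdNormalPDF := aux_pdf_eq ▸ integrable_gaussianPDFReal 0 1
  have hcont : Continuous stdNormalPDF := by unfold stdNormalPDF; fun_prop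
  have key : ∀ y : ℝ, stdNormalCDF y
      = (∫ t in Iic (0:ℝ), stdNormalPDF t) + ∫ t in (0:ℝ)..y, stdNormalPDF t := by
    intro y
    rw [aux_cdf_eq_integral,
      ← intervalIntegral.integral_Iic_sub_Iic hint.integrableOn hint.integrableOn]
    ring
  have : HasDerivAt (fun y => (∫ t in Iic (0:ℝ), stdNormalPDF t)
      + ∫ t in (0:ℝ)..y, stdNormalPDF t) (stdNormalPDF x) x := by
    refine HasDerivAt.const_add _ ?_
    exact intervalIntegral.integral_hasDerivAt_right (hint.intervalIntegrable)
      hcont.aestronglyMeasurable.stronglyMeasurableAtFilter hcont.continuousAt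
  exact this.congr_of_eventuallyEq (Filter.Eventually.of_forall key)

lemma aux_gauss_map_neg : (gaussianReal 0 1).map (fun t => (-1 : ℝ) * t) = gaussianReal 0 1 := by
  rw [gaussianReal_map_const_mul (-1 : ℝ)]
  norm_num

instance : NullSingletonClass (gaussianReal 0 1) :=
  ⟨fun x => (gaussianReal_absolutelyContinuous 0 one_ne_zero) (measure_singleton x)⟩

lemma stdNormalCDF_neg (x : ℝ) : stdNormalCDF (-x) = 1 - stdNormalCDF x := by
  have h1 : gaussianReal 0 1 (Iic (-x)) = gaussianReal 0 1 (Ici x) := by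
    conv_lhs => rw [← aux_gauss_map_neg]
    rw [Measure.map_apply (by fun_prop) measurableSet_Iic]
    congr 1
    ext t
    simp only [mem_preimage, mem_Iic, mem_Ici]
    constructor <;> intro h <;> linarith
  have h2 : gaussianReal 0 1 (Ici x) = 1 - gaussianReal 0 1 (Iic x) := by
    rw [← compl_Iio, measure_compl measurableSet_Iio (measure_ne_top _ _), measure_univ,
      measure_congr Iio_ae_eq_Iic]
  rw [stdNormalCDF, stdNormalCDF, cdf_eq_real, cdf_eq_real, measureReal_def, measureReal_def, h1.trans h2,
    ENNReal.toReal_sub_of_le prob_le_one ENNReal.one_ne_top, ENNReal.toReal_one]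

lemma aux_var_ne_zero {s : ℝ} (hs : 0 < s) : (s ^ 2).toNNReal ≠ 0 := by
  simp [Real.toNNReal_eq_zero, not_le]
  positivity

lemma aux_gauss_scale {s : ℝ} (hs : 0 < s) (x : ℝ) :
    (gaussianReal 0 (s ^ 2).toNNReal) (Iic x) = gaussianReal 0 1 (Iic (x / s)) := by
  have hm : (gaussianReal 0 1).map (fun t => s * t) = gaussianReal 0 (s ^ 2).toNNReal := by
    rw [gaussianReal_map_const_mul s]
    norm_num
    congr 1
    ext
    simp [Real.coe_toNNReal _ (sq_nonneg s)]
  rw [← hm, Measure.map_apply (by fun_prop) measurableSet_Iic]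
  congr 1
  ext t
  simp only [mem_preimage, mem_Iic]
  rw [le_div_iff₀ hs, mul_comm]

lemma aux_measure_Icc {ν s : ℝ} (hν : 0 < ν) (hs : 0 < s) :
    ((gaussianReal 0 (s ^ 2).toNNReal) (Icc (-ν) ν)).toReal
      = 2 * stdNormalCDF (ν / s) - 1 := by
  set μs := gaussianReal 0 (s ^ 2).toNNReal with hμs
  haveI : NullSingletonClass μs :=
    ⟨fun x => (gaussianReal_absolutelyContinuous 0 (aux_var_ne_zero hs)) (measure_singleton x)⟩
  have hsub : Iio (-ν) ⊆ Iic ν := fun t ht => by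
    simp only [mem_Iio] at ht; simp only [mem_Iic]; linarith
  have hdiff : μs (Icc (-ν) ν) = μs (Iic ν) - μs (Iio (-ν)) := by
    rw [← (show Iic ν \ Iio (-ν) = Icc (-ν) ν by ext t; simp [and_comm]), measure_diff hsub (by measurability) (measure_ne_top _ _)]
  have hIic : (μs (Iic ν)).toReal = stdNormalCDF (ν / s) := by
    rw [hμs, aux_gauss_scale hs, ← measureReal_def, ← cdf_eq_real, stdNormalCDF]
  have hIio : (μs (Iio (-ν))).toReal = 1 - stdNormalCDF (ν / s) := by
    rw [measure_congr Iio_ae_eq_Iic, hμs, aux_gauss_scale hs, ← measureReal_def, ← cdf_eq_real]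
    have : -ν / s = -(ν / s) := by ring
    rw [this, ← stdNormalCDF, stdNormalCDF_neg]
  rw [hdiff, ENNReal.toReal_sub_of_le (measure_mono hsub) (measure_ne_top _ _), hIic, hIio]
  ring

lemma aux_shortPSF_eq {ν : ℝ} (hν : 0 < ν) (θ : ℝ) :
    shortPSF boxcar ν (0 - θ) = Set.indicator (Icc (-ν) ν) (fun _ => 1 / (2 * ν)) θ := by
  have habs : |(0 - θ) / ν| ≤ 1 ↔ θ ∈ Icc (-ν) ν := by
    rw [abs_div, abs_of_pos hν, div_le_one hν, zero_sub, abs_neg, abs_le, mem_Icc]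
  rw [shortPSF, boxcar, Set.indicator_apply]
  split_ifs with h h' h'
  · ring
  · exact absurd (habs.mp h) h'
  · exact absurd (habs.mpr h') h
  · ring

lemma Vnu_eq {ν : ℝ} (hν : 0 < ν) {s : ℝ} (hs : 0 < s) :
    Vnu boxcar ν s 0 = (1 / (4 * ν ^ 2)) *
      ((2 * stdNormalCDF (ν / s) - 1) - (2 * stdNormalCDF (ν / s) - 1) ^ 2) := by
  set m := ((gaussianReal 0 (s ^ 2).toNNReal) (Icc (-ν) ν)).toReal with hm
  have h1 : (∫ θ, shortPSF boxcar ν (0 - θ) ∂(gaussianReal 0 (s ^ 2).toNNReal))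
      = m * (1 / (2 * ν)) := by
    rw [integral_congr_ae (Eventually.of_forall fun θ => aux_shortPSF_eq hν θ),
      integral_indicator_const _ measurableSet_Icc, smul_eq_mul, measureReal_def]
  have h2 : (∫ θ, (shortPSF boxcar ν (0 - θ)) ^ 2 ∂(gaussianReal 0 (s ^ 2).toNNReal))
      = m * (1 / (2 * ν)) ^ 2 := by
    have heq : ∀ θ, (shortPSF boxcar ν (0 - θ)) ^ 2
        = Set.indicator (Icc (-ν) ν) (fun _ => (1 / (2 * ν)) ^ 2) θ := by
      intro θ
      rw [aux_shortPSF_eq hν θ, Set.indicator_apply, Set.indicator_apply]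
      split_ifs <;> simp
    rw [integral_congr_ae (Eventually.of_forall heq),
      integral_indicator_const _ measurableSet_Icc, smul_eq_mul, measureReal_def]
  rw [Vnu, h1, h2, hm, aux_measure_Icc hν hs]
  ring

end Aux

theorem boxcar_variance_hasDerivAt (ν : ℝ) (hν : 0 < ν) (σ : ℝ) (hσ : 0 < σ) :
    HasDerivAt (fun s : ℝ => Vnu boxcar ν s 0)
      ((1 / (4 * ν ^ 2)) * (-(2 * ν / σ ^ 2) * stdNormalPDF (ν / σ))
        * (1 - 2 * (2 * stdNormalCDF (ν / σ) - 1))) σ := by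
  have hinv : HasDerivAt (fun s : ℝ => ν / s) (ν * -(σ ^ 2)⁻¹) σ := by
    simpa [div_eq_mul_inv] using (hasDerivAt_inv hσ.ne').const_mul ν
  have hG : HasDerivAt (fun s : ℝ => 2 * stdNormalCDF (ν / s) - 1)
      (2 * (stdNormalPDF (ν / σ) * (ν * -(σ ^ 2)⁻¹))) σ :=
    (((stdNormalCDF_hasDerivAt (ν / σ)).comp σ hinv).const_mul 2).sub_const 1
  have hF : HasDerivAt (fun s : ℝ => (1 / (4 * ν ^ 2)) *
      ((2 * stdNormalCDF (ν / s) - 1) - (2 * stdNormalCDF (ν / s) - 1) ^ 2))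
      ((1 / (4 * ν ^ 2)) * (-(2 * ν / σ ^ 2) * stdNormalPDF (ν / σ))
        * (1 - 2 * (2 * stdNormalCDF (ν / σ) - 1))) σ := by
    have := (hG.sub (hG.pow 2)).const_mul (1 / (4 * ν ^ 2))
    refine this.congr_deriv ?_
    have hσ2 : (σ : ℝ) ^ 2 ≠ 0 := by positivity
    field_simp
    ring
  refine hF.congr_of_eventuallyEq ?_
  filter_upwards [Ioi_mem_nhds hσ] with s hs
  exact Vnu_eq hν hs
end

section
/- Let K : ℝ → ℝ be a smoothing kernel with bound M, let ν > 0, and set h_ν(x) = (1/ν)·K(x/ν). Assume h_ν is Lipschitz continuous on ℝ. Then the function σ ↦ sup_{x ∈ ℝ} V_ν(x,σ) is continuous on (0,∞). -/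
open MeasureTheory ProbabilityTheory Real Filter

lemma gauss_abs_integrable : Integrable (fun z : ℝ => |z|) (gaussianReal 0 1) := by
  rw [gaussianReal_of_var_ne_zero 0 one_ne_zero,
    integrable_withDensity_iff (measurable_gaussianPDF 0 1)
      (ae_of_all _ fun x => ENNReal.ofReal_lt_top)]
  have heq : ∀ x : ℝ, |x| * ((gaussianPDF 0 1 x).toReal)
      = (√(2 * π))⁻¹ * |x * rexp (-(2⁻¹ : ℝ) * x ^ 2)| := by
    intro x
    rw [gaussianPDF, ENNReal.toReal_ofReal (gaussianPDFReal_nonneg _ _ _), gaussianPDFReal]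
    simp only [NNReal.coe_one, mul_one, sub_zero]
    rw [abs_mul, abs_of_nonneg (Real.exp_nonneg _),
      show -x ^ 2 / 2 = -(2⁻¹:ℝ) * x ^ 2 by ring]
    ring
  simp_rw [heq]
  exact (integrable_mul_exp_neg_mul_sq (by norm_num : (0:ℝ) < 2⁻¹)).abs.const_mul _


theorem supVar_continuousOn_of_lipschitz
    (K : ℝ → ℝ) (M ν : ℝ) (hν : 0 < ν)
    (hK0 : ∀ x, 0 ≤ K x) (hKM : ∀ x, K x ≤ M)
    (hKeven : ∀ x, K (-x) = K x) (hKint : Integrable K)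
    (L : NNReal) (hLip : LipschitzWith L (shortPSF K ν)) :
    ContinuousOn (fun σ : ℝ => ⨆ x : ℝ, Vnu K ν σ x) (Set.Ioi 0) := by
  have hM0 : 0 ≤ M := le_trans (hK0 0) (hKM 0)
  set B := M / ν with hB
  have hB0 : 0 ≤ B := div_nonneg hM0 hν.le
  have hh0 : ∀ x, 0 ≤ shortPSF K ν x := fun x =>
    mul_nonneg (by positivity) (hK0 _)
  have hhB : ∀ x, shortPSF K ν x ≤ B := fun x => by
    have : (1 / ν) * K (x / ν) ≤ (1 / ν) * M :=
      mul_le_mul_of_nonneg_left (hKM _) (by positivity)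
    simpa [shortPSF, hB, div_eq_mul_inv, one_mul, mul_comm] using this
  have hc : Continuous (shortPSF K ν) := hLip.continuous
  set γ := gaussianReal 0 1 with hγ
  set E := ∫ z, |z| ∂γ with hE
  have hEint : Integrable (fun z : ℝ => |z|) γ := gauss_abs_integrable
  have hE0 : 0 ≤ E := integral_nonneg fun _ => abs_nonneg _
  -- boundedness integrability helper
  have hintb : ∀ (g : ℝ → ℝ) (c : ℝ), Continuous g → (∀ z, |g z| ≤ c) → Integrable g γ :=
    fun g c hg hb => (integrable_const c).mono' hg.aestronglyMeasurable
      (ae_of_all _ fun z => by simpa using hb z)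
  -- map representation
  have hmap : ∀ σ : ℝ, gaussianReal 0 (σ ^ 2).toNNReal = γ.map (fun z => σ * z) := by
    intro σ
    rw [hγ, gaussianReal_map_const_mul σ, mul_zero, mul_one]
    congr 1
    exact NNReal.coe_injective (by simp [Real.coe_toNNReal _ (sq_nonneg σ)])
  have hrw : ∀ (σ x : ℝ) (f : ℝ → ℝ), Continuous f →
      (∫ θ, f (x - θ) ∂(gaussianReal 0 (σ ^ 2).toNNReal)) = ∫ z, f (x - σ * z) ∂γ := by
    intro σ x f hf
    rw [hmap σ]
    exact integral_map (f := fun θ => f (x - θ)) (measurable_id.const_mul σ).aemeasurable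
      ((hf.comp (continuous_const.sub continuous_id)).aestronglyMeasurable)
  have hVrw : ∀ σ x, Vnu K ν σ x
      = (∫ z, (shortPSF K ν (x - σ * z)) ^ 2 ∂γ)
        - (∫ z, shortPSF K ν (x - σ * z) ∂γ) ^ 2 := by
    intro σ x
    unfold Vnu
    rw [hrw σ x (fun y => (shortPSF K ν y) ^ 2) (hc.pow 2), hrw σ x _ hc]
  -- integrabilities
  have hint1 : ∀ σ x, Integrable (fun z => shortPSF K ν (x - σ * z)) γ := fun σ x =>
    hintb _ B (hc.comp (by fun_prop)) fun z => by
      rw [abs_of_nonneg (hh0 _)]; exact hhB _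
  have hint2 : ∀ σ x, Integrable (fun z => (shortPSF K ν (x - σ * z)) ^ 2) γ := fun σ x =>
    hintb _ (B ^ 2) ((hc.comp (by fun_prop)).pow 2) fun z => by
      rw [abs_of_nonneg (pow_nonneg (hh0 _) 2)]
      exact pow_le_pow_left₀ (hh0 _) (hhB _) 2
  -- pointwise Lipschitz estimate
  have hpt : ∀ σ σ' x (z : ℝ),
      |shortPSF K ν (x - σ * z) - shortPSF K ν (x - σ' * z)| ≤ (L * |σ - σ'|) * |z| := by
    intro σ σ' x z
    have := hLip.dist_le_mul (x - σ * z) (x - σ' * z)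
    rw [Real.dist_eq, Real.dist_eq] at this
    calc |shortPSF K ν (x - σ * z) - shortPSF K ν (x - σ' * z)|
        ≤ L * |x - σ * z - (x - σ' * z)| := this
      _ = (L * |σ - σ'|) * |z| := by
          rw [show x - σ * z - (x - σ' * z) = (σ' - σ) * z by ring, abs_mul,
            abs_sub_comm σ' σ]; ring
  -- first moment difference
  have hI1 : ∀ σ σ' x,
      |(∫ z, shortPSF K ν (x - σ * z) ∂γ) - ∫ z, shortPSF K ν (x - σ' * z) ∂γ|
        ≤ (L * E) * |σ - σ'| := by
    intro σ σ' x
    rw [← integral_sub (hint1 σ x) (hint1 σ' x)]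
    calc |∫ z, (shortPSF K ν (x - σ * z) - shortPSF K ν (x - σ' * z)) ∂γ|
        ≤ ∫ z, |shortPSF K ν (x - σ * z) - shortPSF K ν (x - σ' * z)| ∂γ := by
          simpa [Real.norm_eq_abs] using norm_integral_le_integral_norm
            (μ := γ) (fun z => shortPSF K ν (x - σ * z) - shortPSF K ν (x - σ' * z))
      _ ≤ ∫ z, (L * |σ - σ'|) * |z| ∂γ := by
          refine integral_mono_of_nonneg (ae_of_all _ fun z => abs_nonneg _)
            (hEint.const_mul _) (ae_of_all _ fun z => hpt σ σ' x z)
      _ = (L * E) * |σ - σ'| := by rw [integral_const_mul]; ring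
  -- second moment difference
  have hI2 : ∀ σ σ' x,
      |(∫ z, (shortPSF K ν (x - σ * z)) ^ 2 ∂γ) - ∫ z, (shortPSF K ν (x - σ' * z)) ^ 2 ∂γ|
        ≤ (2 * B * L * E) * |σ - σ'| := by
    intro σ σ' x
    rw [← integral_sub (hint2 σ x) (hint2 σ' x)]
    calc |∫ z, ((shortPSF K ν (x - σ * z)) ^ 2 - (shortPSF K ν (x - σ' * z)) ^ 2) ∂γ|
        ≤ ∫ z, |(shortPSF K ν (x - σ * z)) ^ 2 - (shortPSF K ν (x - σ' * z)) ^ 2| ∂γ := by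
          simpa [Real.norm_eq_abs] using norm_integral_le_integral_norm
            (μ := γ) (fun z => (shortPSF K ν (x - σ * z)) ^ 2 - (shortPSF K ν (x - σ' * z)) ^ 2)
      _ ≤ ∫ z, (2 * B * (L * |σ - σ'|)) * |z| ∂γ := by
          refine integral_mono_of_nonneg (ae_of_all _ fun z => abs_nonneg _)
            (hEint.const_mul _) (ae_of_all _ fun z => ?_)
          have hsum : |shortPSF K ν (x - σ * z) + shortPSF K ν (x - σ' * z)| ≤ 2 * B := by
            rw [abs_of_nonneg (add_nonneg (hh0 _) (hh0 _))]
            have := add_le_add (hhB (x - σ * z)) (hhB (x - σ' * z))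
            linarith
          calc |(shortPSF K ν (x - σ * z)) ^ 2 - (shortPSF K ν (x - σ' * z)) ^ 2|
              = |shortPSF K ν (x - σ * z) - shortPSF K ν (x - σ' * z)|
                * |shortPSF K ν (x - σ * z) + shortPSF K ν (x - σ' * z)| := by
                rw [← abs_mul]; ring_nf
            _ ≤ ((L * |σ - σ'|) * |z|) * (2 * B) :=
                mul_le_mul (hpt σ σ' x z) hsum (abs_nonneg _)
                  (by positivity)
            _ = (2 * B * (L * |σ - σ'|)) * |z| := by ring
      _ = (2 * B * L * E) * |σ - σ'| := by rw [integral_const_mul]; ring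
  -- bounds on first moment
  have hI1b : ∀ σ x, 0 ≤ (∫ z, shortPSF K ν (x - σ * z) ∂γ)
      ∧ (∫ z, shortPSF K ν (x - σ * z) ∂γ) ≤ B := by
    intro σ x
    constructor
    · exact integral_nonneg fun z => hh0 _
    · calc (∫ z, shortPSF K ν (x - σ * z) ∂γ) ≤ ∫ _, B ∂γ :=
            integral_mono (hint1 σ x) (integrable_const B) fun z => hhB _
        _ = B := by simp
  -- key uniform estimate
  set C : ℝ := 4 * B * (L * E) with hC
  have hC0 : 0 ≤ C + L * E := by positivity
  have key : ∀ σ σ' x, |Vnu K ν σ x - Vnu K ν σ' x| ≤ (2 * B * L * E + 2 * B * L * E) * |σ - σ'| := by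
    intro σ σ' x
    rw [hVrw σ x, hVrw σ' x]
    set a := ∫ z, shortPSF K ν (x - σ * z) ∂γ
    set a' := ∫ z, shortPSF K ν (x - σ' * z) ∂γ
    set b := ∫ z, (shortPSF K ν (x - σ * z)) ^ 2 ∂γ
    set b' := ∫ z, (shortPSF K ν (x - σ' * z)) ^ 2 ∂γ
    have h1 := hI1 σ σ' x
    have h2 := hI2 σ σ' x
    have ha := hI1b σ x
    have ha' := hI1b σ' x
    have hsq : |a ^ 2 - a' ^ 2| ≤ 2 * B * ((L * E) * |σ - σ'|) := by
      have : |a ^ 2 - a' ^ 2| = |a - a'| * |a + a'| := by rw [← abs_mul]; ring_nf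
      rw [this]
      have hsum : |a + a'| ≤ 2 * B := by
        rw [abs_of_nonneg (add_nonneg ha.1 ha'.1)]; linarith [ha.2, ha'.2]
      calc |a - a'| * |a + a'| ≤ ((L * E) * |σ - σ'|) * (2 * B) :=
            mul_le_mul h1 hsum (abs_nonneg _) (by positivity)
        _ = 2 * B * ((L * E) * |σ - σ'|) := by ring
    calc |b - a ^ 2 - (b' - a' ^ 2)| ≤ |b - b'| + |a ^ 2 - a' ^ 2| := by
          have := abs_sub (b - b') (a ^ 2 - a' ^ 2)
          calc |b - a ^ 2 - (b' - a' ^ 2)| = |(b - b') - (a ^ 2 - a' ^ 2)| := by ring_nf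
            _ ≤ |b - b'| + |a ^ 2 - a' ^ 2| := abs_sub _ _
      _ ≤ (2 * B * L * E) * |σ - σ'| + 2 * B * ((L * E) * |σ - σ'|) := add_le_add h2 hsq
      _ = (2 * B * L * E + 2 * B * L * E) * |σ - σ'| := by ring
  -- boundedness of Vnu in x
  have hbdd : ∀ σ : ℝ, BddAbove (Set.range fun x => Vnu K ν σ x) := by
    intro σ
    refine ⟨B ^ 2, ?_⟩
    rintro _ ⟨x, rfl⟩
    show Vnu K ν σ x ≤ B ^ 2
    rw [hVrw σ x]
    have hb2 : (∫ z, (shortPSF K ν (x - σ * z)) ^ 2 ∂γ) ≤ B ^ 2 := by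
      calc (∫ z, (shortPSF K ν (x - σ * z)) ^ 2 ∂γ) ≤ ∫ _, B ^ 2 ∂γ :=
            integral_mono (hint2 σ x) (integrable_const _)
              fun z => pow_le_pow_left₀ (hh0 _) (hhB _) 2
        _ = B ^ 2 := by simp
    nlinarith [sq_nonneg (∫ z, shortPSF K ν (x - σ * z) ∂γ)]
  -- the sup is Lipschitz
  set D : ℝ := 2 * B * L * E + 2 * B * L * E with hD
  have hD0 : 0 ≤ D := by positivity
  have hsup : ∀ σ σ' : ℝ, (⨆ x, Vnu K ν σ x) - (⨆ x, Vnu K ν σ' x) ≤ D * |σ - σ'| := by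
    intro σ σ'
    rw [sub_le_iff_le_add]
    refine ciSup_le fun x => ?_
    have h1 := abs_le.1 (key σ σ' x)
    have h2 := le_ciSup (hbdd σ') x
    linarith [h1.2]
  have hlipf : LipschitzWith D.toNNReal (fun σ : ℝ => ⨆ x : ℝ, Vnu K ν σ x) := by
    refine LipschitzWith.of_dist_le_mul fun σ σ' => ?_
    rw [Real.dist_eq, Real.dist_eq]
    refine le_trans (abs_le.2 ⟨?_, ?_⟩) (mul_le_mul_of_nonneg_right
      (Real.le_coe_toNNReal D) (abs_nonneg _))
    · have := hsup σ' σ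
      rw [abs_sub_comm σ' σ] at this
      linarith
    · exact hsup σ σ'
  exact hlipf.continuous.continuousOn
end
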